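/- Let $l \ge n \ge 1$ and let $P$ be a polynomial of degree at most $n$ with real coefficients that is nonnegative at every point of $\{0,1,\dots,l\}$. Then $P$ is an extreme point of the convex cone of such polynomials if and only if $P$ has degree exactly $n$ and all $n$ roots of $P$ are simple and contained in $\{0,1,\dots,l\}$. -/

import Mathlib

open Polynomial

lemma le_roots_aux (Q : Polynomial ℝ) (hQ : Q ≠ 0)
    (T : Multiset ℝ) (hnd : T.Nodup) (hroot : ∀ x ∈ T, Q.IsRoot x) : T ≤ Q.roots := by
  classical
  rw [Multiset.le_iff_count]
  intro x
  by_cases hx : x ∈ T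
  · rw [Multiset.count_eq_one_of_mem hnd hx, Polynomial.count_roots]
    exact (Polynomial.rootMultiplicity_pos hQ).mpr (hroot x hx)
  · simp [Multiset.count_eq_zero_of_notMem hx]

lemma key_roots (Q : Polynomial ℝ) (hQ : Q ≠ 0) {n : ℕ} (hdeg : Q.natDegree ≤ n)
    (T : Multiset ℝ) (hnd : T.Nodup) (hcard : Multiset.card T = n)
    (hroot : ∀ x ∈ T, Q.IsRoot x) : Q.natDegree = n ∧ Q.roots = T := by
  have hle := le_roots_aux Q hQ T hnd hroot
  have h1 : n ≤ Multiset.card Q.roots := hcard ▸ Multiset.card_le_card hle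
  have h2 : Multiset.card Q.roots ≤ Q.natDegree := Q.card_roots'
  refine ⟨le_antisymm hdeg (h1.trans h2), ?_⟩
  exact (Multiset.eq_of_le_of_card_le hle (by omega)).symm

lemma prop_of_roots (P Q : Polynomial ℝ) {n : ℕ}
    (hPd : P.natDegree = n) (hQd : Q.natDegree = n) (T : Multiset ℝ)
    (hPr : P.roots = T) (hQr : Q.roots = T)
    (hP0 : P ≠ 0) (hTc : Multiset.card T = n) :
    Q = (Q.leadingCoeff / P.leadingCoeff) • P := by
  have hP := Polynomial.C_leadingCoeff_mul_prod_multiset_X_sub_C (p := P) (by rw [hPr, hTc, hPd])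
  have hQ := Polynomial.C_leadingCoeff_mul_prod_multiset_X_sub_C (p := Q) (by rw [hQr, hTc, hQd])
  have hlc : P.leadingCoeff ≠ 0 := Polynomial.leadingCoeff_ne_zero.mpr hP0
  calc Q = C Q.leadingCoeff * (Multiset.map (fun a => X - C a) T).prod := by rw [← hQr, hQ]
    _ = C (Q.leadingCoeff / P.leadingCoeff) * (C P.leadingCoeff * (Multiset.map (fun a => X - C a) T).prod) := by
          rw [← mul_assoc, ← Polynomial.C_mul, div_mul_cancel₀ _ hlc]
    _ = (Q.leadingCoeff / P.leadingCoeff) • P := by rw [hPr] at hP; rw [hP, Polynomial.smul_eq_C_mul]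

theorem stmt_9 (n l : ℕ) (hn : 1 ≤ n) (hnl : n ≤ l)
    (P : Polynomial ℝ) (hP0 : P ≠ 0) (hdeg : P.natDegree ≤ n)
    (hpos : ∀ i ≤ l, 0 ≤ P.eval (i : ℝ)) :
    (∀ P₁ P₂ : Polynomial ℝ, P₁.natDegree ≤ n → P₂.natDegree ≤ n →
        (∀ i ≤ l, 0 ≤ P₁.eval (i : ℝ)) → (∀ i ≤ l, 0 ≤ P₂.eval (i : ℝ)) →
        P = P₁ + P₂ →
        ∃ c₁ c₂ : ℝ, 0 ≤ c₁ ∧ 0 ≤ c₂ ∧ P₁ = c₁ • P ∧ P₂ = c₂ • P)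
      ↔ (P.natDegree = n ∧
          ∃ S : Finset ℕ, S ⊆ Finset.range (l + 1) ∧ S.card = n ∧
            P.roots = S.val.map (fun i => (i : ℝ))) := by
  classical
  constructor
  · -- forward: extreme → roots structure
    intro hext
    set Z : Finset ℕ := (Finset.range (l+1)).filter (fun i => P.eval (i:ℝ) = 0) with hZdef
    have hZsub : Z ⊆ Finset.range (l+1) := Finset.filter_subset _ _
    set T : Multiset ℝ := Multiset.map (fun i : ℕ => (i:ℝ)) Z.val with hTdef
    have hTeq : Z.val.map (fun i => (i:ℝ)) = T := by rw [hTdef]; simp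
    have hTnd : T.Nodup := Multiset.Nodup.map Nat.cast_injective Z.nodup
    have hTroot : ∀ x ∈ T, P.IsRoot x := by
      intro x hx
      obtain ⟨i, hi, rfl⟩ := Multiset.mem_map.mp hx
      exact (by have h := Finset.mem_filter.mp (show i ∈ Z from hi); exact h.2)
    have hTcard : Multiset.card T = Z.card := by simp [hTdef]
    -- card Z ≤ n
    have hZle : Z.card ≤ n := by
      have := Multiset.card_le_card (le_roots_aux P hP0 T hTnd hTroot)
      have := P.card_roots'
      omega
    -- card Z ≥ n
    have hZge : n ≤ Z.card := by
      by_contra hlt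
      push_neg at hlt
      have hcardlt : Z.card < (Finset.range (l+1)).card := by
        rw [Finset.card_range]; omega
      obtain ⟨a, ha, haZ⟩ := Finset.exists_of_ssubset
        (hZsub.ssubset_of_ne (fun h => by rw [h, Finset.card_range] at hcardlt; omega))
      have hal : a ≤ l := Nat.lt_succ_iff.mp (Finset.mem_range.mp ha)
      have hPa : 0 < P.eval (a:ℝ) := by
        rcases lt_or_eq_of_le (hpos a hal) with h | h
        · exact h
        · exact absurd (Finset.mem_filter.mpr ⟨ha, h.symm⟩) haZ
      set Q : Polynomial ℝ := (∏ i ∈ Z, (X - C (i:ℝ))) * (X - C (a:ℝ)) with hQdef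
      have hQm : Q.Monic := (monic_prod_of_monic _ _ (fun i _ => monic_X_sub_C _)).mul (monic_X_sub_C _)
      have hQ0 : Q ≠ 0 := hQm.ne_zero
      have hQdeg : Q.natDegree ≤ n := by
        rw [hQdef, Polynomial.natDegree_mul (by
              exact fun h => hQ0 (by rw [hQdef, h, zero_mul])) (X_sub_C_ne_zero _),
          Polynomial.natDegree_prod _ _ (fun i _ => X_sub_C_ne_zero _)]
        simp only [natDegree_X_sub_C, Finset.sum_const, smul_eq_mul, mul_one]
        omega
      have hQa : Q.eval (a:ℝ) = 0 := by simp [hQdef]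
      have hQZ : ∀ i ∈ Z, Q.eval (i:ℝ) = 0 := by
        intro i hi
        rw [hQdef, eval_mul, Polynomial.eval_prod, Finset.prod_eq_zero hi (by simp), zero_mul]
      -- ε
      set G : Finset ℕ := (Finset.range (l+1)).filter (fun i => P.eval (i:ℝ) ≠ 0) with hGdef
      have haG : a ∈ G := Finset.mem_filter.mpr ⟨ha, ne_of_gt hPa⟩
      have hGne : G.Nonempty := ⟨a, haG⟩
      set ε : ℝ := G.inf' hGne (fun i => P.eval (i:ℝ) / (|Q.eval (i:ℝ)| + 1)) with hεdef
      have hGpos : ∀ i ∈ G, 0 < P.eval (i:ℝ) := by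
        intro i hi
        obtain ⟨hir, hine⟩ := Finset.mem_filter.mp hi
        exact lt_of_le_of_ne (hpos i (Nat.lt_succ_iff.mp (Finset.mem_range.mp hir))) (Ne.symm hine)
      have hεpos : 0 < ε := by
        rw [hεdef, Finset.lt_inf'_iff]
        intro i hi
        exact div_pos (hGpos i hi) (by positivity)
      have hεle : ∀ i ∈ G, ε * |Q.eval (i:ℝ)| ≤ P.eval (i:ℝ) := by
        intro i hi
        have h1 : ε ≤ P.eval (i:ℝ) / (|Q.eval (i:ℝ)| + 1) := Finset.inf'_le _ hi
        have h2 : (0:ℝ) < |Q.eval (i:ℝ)| + 1 := by positivity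
        have h3 : ε * (|Q.eval (i:ℝ)| + 1) ≤ P.eval (i:ℝ) := by
          rw [← le_div_iff₀ h2]; exact h1
        nlinarith [abs_nonneg (Q.eval (i:ℝ)), hεpos]
      -- the decomposition
      have hkey : ∀ i ≤ l, |ε * Q.eval (i:ℝ)| ≤ P.eval (i:ℝ) := by
        intro i hil
        by_cases hP : P.eval (i:ℝ) = 0
        · have hiZ : i ∈ Z := Finset.mem_filter.mpr ⟨Finset.mem_range.mpr (Nat.lt_succ_of_le hil), hP⟩
          rw [hQZ i hiZ, mul_zero, abs_zero, hP]
        · have hiG : i ∈ G := Finset.mem_filter.mpr ⟨Finset.mem_range.mpr (Nat.lt_succ_of_le hil), hP⟩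
          rw [abs_mul, abs_of_pos hεpos]
          exact hεle i hiG
      set P₁ : Polynomial ℝ := (1/2 : ℝ) • P + (ε/2) • Q with hP1def
      set P₂ : Polynomial ℝ := (1/2 : ℝ) • P - (ε/2) • Q with hP2def
      have hd1 : P₁.natDegree ≤ n :=
        le_trans (natDegree_add_le _ _) (by
          simp only [max_le_iff]
          exact ⟨le_trans (natDegree_smul_le _ _) hdeg, le_trans (natDegree_smul_le _ _) hQdeg⟩)
      have hd2 : P₂.natDegree ≤ n :=
        le_trans (natDegree_sub_le _ _) (by
          simp only [max_le_iff]
          exact ⟨le_trans (natDegree_smul_le _ _) hdeg, le_trans (natDegree_smul_le _ _) hQdeg⟩)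
      have hpos1 : ∀ i ≤ l, 0 ≤ P₁.eval (i:ℝ) := by
        intro i hil
        have := hkey i hil
        have h := abs_le.mp this
        simp only [hP1def, eval_add, eval_smul, smul_eq_mul]
        linarith [h.1]
      have hpos2 : ∀ i ≤ l, 0 ≤ P₂.eval (i:ℝ) := by
        intro i hil
        have h := abs_le.mp (hkey i hil)
        simp only [hP2def, eval_sub, eval_smul, smul_eq_mul]
        linarith [h.2]
      have hsum : P = P₁ + P₂ := by
        rw [hP1def, hP2def]
        module
      obtain ⟨c₁, c₂, hc₁, hc₂, he₁, he₂⟩ := hext P₁ P₂ hd1 hd2 hpos1 hpos2 hsum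
      -- evaluate he₁ at a
      have heva : P₁.eval (a:ℝ) = c₁ * P.eval (a:ℝ) := by rw [he₁]; simp
      have heva' : (1/2) * P.eval (a:ℝ) = c₁ * P.eval (a:ℝ) := by
        rw [← heva, hP1def]; simp [hQa]
      have hc : c₁ = 1/2 := by
        have := mul_right_cancel₀ (ne_of_gt hPa) heva'
        linarith
      have : (ε/2) • Q = (0 : Polynomial ℝ) := by
        have h := he₁
        rw [hP1def, hc] at h
        have : (1/2 : ℝ) • P + (ε/2) • Q - (1/2 : ℝ) • P = (1/2 : ℝ) • P - (1/2 : ℝ) • P := by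
          rw [h]
        simpa using this
      rcases smul_eq_zero.mp this with h | h
      · exact absurd h (by positivity)
      · exact hQ0 h
    have hZcard : Z.card = n := le_antisymm hZle hZge
    obtain ⟨hnd, hroots⟩ := key_roots P hP0 hdeg T hTnd (by rw [hTcard, hZcard]) hTroot
    exact ⟨hnd, Z, hZsub, hZcard, by rw [hTeq]; exact hroots⟩
  · -- backward
    rintro ⟨hPn, S, hSsub, hScard, hroots⟩
    intro P₁ P₂ hd1 hd2 hpos1 hpos2 hsum
    set T : Multiset ℝ := Multiset.map (fun i : ℕ => (i:ℝ)) S.val with hTdef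
    have hTeq : S.val.map (fun i => (i:ℝ)) = T := by rw [hTdef]; simp
    rw [hTeq] at hroots
    have hTnd : T.Nodup := Multiset.Nodup.map Nat.cast_injective S.nodup
    have hTcard : Multiset.card T = n := by simp [hTdef, hScard]
    -- pick j with P(j) > 0
    have hcardlt : S.card < (Finset.range (l+1)).card := by
      rw [Finset.card_range]; omega
    obtain ⟨j, hj, hjS⟩ := Finset.exists_of_ssubset
      (hSsub.ssubset_of_ne (fun h => by rw [h, Finset.card_range] at hcardlt; omega))
    have hjl : j ≤ l := Nat.lt_succ_iff.mp (Finset.mem_range.mp hj)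
    have hPj : 0 < P.eval (j:ℝ) := by
      rcases lt_or_eq_of_le (hpos j hjl) with h | h
      · exact h
      · exfalso
        have : (j:ℝ) ∈ P.roots := (Polynomial.mem_roots hP0).mpr h.symm
        rw [hroots] at this
        obtain ⟨i, hi, hij⟩ := Multiset.mem_map.mp this
        exact hjS (by rwa [Nat.cast_injective hij] at hi)
    -- each x in T is a root of P, hence of P₁ and P₂
    have hTzero : ∀ x ∈ T, P.eval x = 0 := by
      intro x hx
      have : x ∈ P.roots := by rw [hroots]; exact hx
      exact (Polynomial.mem_roots hP0).mp this
    have hT12 : ∀ x ∈ T, P₁.eval x = 0 ∧ P₂.eval x = 0 := by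
      intro x hx
      obtain ⟨i, hi, rfl⟩ := Multiset.mem_map.mp hx
      have hil : i ≤ l := Nat.lt_succ_iff.mp (Finset.mem_range.mp (hSsub hi))
      have h1 := hpos1 i hil
      have h2 := hpos2 i hil
      have h0 := hTzero _ hx
      rw [hsum, eval_add] at h0
      constructor <;> linarith
    by_cases h1 : P₁ = 0
    · refine ⟨0, 1, le_refl _, zero_le_one, by simp [h1], ?_⟩
      rw [one_smul, hsum, h1, zero_add]
    by_cases h2 : P₂ = 0
    · refine ⟨1, 0, zero_le_one, le_refl _, ?_, by simp [h2]⟩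
      rw [one_smul, hsum, h2, add_zero]
    obtain ⟨hd1', hr1⟩ := key_roots P₁ h1 hd1 T hTnd hTcard (fun x hx => (hT12 x hx).1)
    obtain ⟨hd2', hr2⟩ := key_roots P₂ h2 hd2 T hTnd hTcard (fun x hx => (hT12 x hx).2)
    have hroots' : P.roots = T := hroots
    have he1 := prop_of_roots P P₁ hPn hd1' T hroots' hr1 hP0 hTcard
    have he2 := prop_of_roots P P₂ hPn hd2' T hroots' hr2 hP0 hTcard
    set c₁ := P₁.leadingCoeff / P.leadingCoeff with hc1
    set c₂ := P₂.leadingCoeff / P.leadingCoeff with hc2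
    have hev1 : P₁.eval (j:ℝ) = c₁ * P.eval (j:ℝ) := by rw [he1]; simp
    have hev2 : P₂.eval (j:ℝ) = c₂ * P.eval (j:ℝ) := by rw [he2]; simp
    have hc1n : 0 ≤ c₁ := by
      have := hpos1 j hjl
      rw [hev1] at this
      by_contra hneg
      push_neg at hneg
      nlinarith
    have hc2n : 0 ≤ c₂ := by
      have := hpos2 j hjl
      rw [hev2] at this
      by_contra hneg
      push_neg at hneg
      nlinarith
    exact ⟨c₁, c₂, hc1n, hc2n, he1, he2⟩
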